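/- arXiv:2504.06377 — 3 statements merged into one kernel-verified Lean document; each statement's English description precedes it below -/
import Mathlib

section
/- Let h ∈ ℝ^N be symmetric (h_j = h_{(N-j) mod N}) and define L = ε(M − diag(M·1)) where M_{jk} = h_{(k-j) mod N}cos(2πq(k−j)/N) and 1 is the all-ones vector. Then the eigenvalues of L are λ_{m,q} = ε[(Ĥ(q+m) + Ĥ(q−m))/2 − Ĥ(q)] for m = 0, …, N−1, with corresponding eigenvectors v_m, (v_m)_j = exp(2πi·mj/N). -/
noncomputable def dftR (N : ℕ) (h : Fin N → ℝ) (m : ℤ) : ℂ :=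
  ∑ k : Fin N, (h k : ℂ) * Complex.exp (-2 * Real.pi * Complex.I * m * (k : ℕ) / N)

noncomputable def Wc (N : ℕ) (a : ℤ) : ℂ :=
  Complex.exp (2 * Real.pi * Complex.I * a / N)

lemma Wc_add (N : ℕ) (a b : ℤ) : Wc N (a + b) = Wc N a * Wc N b := by
  unfold Wc
  rw [← Complex.exp_add]
  congr 1
  push_cast
  ring

lemma Wc_congr {N : ℕ} (hN : 0 < N) {a b : ℤ} (hab : a ≡ b [ZMOD (N : ℤ)]) :
    Wc N a = Wc N b := by
  obtain ⟨c, hc⟩ : (N : ℤ) ∣ a - b := (Int.ModEq.dvd hab.symm)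
  have ha : a = b + N * c := by linarith
  rw [ha, Wc_add]
  have hNne : (N : ℂ) ≠ 0 := Nat.cast_ne_zero.mpr hN.ne'
  have : Wc N ((N : ℤ) * c) = 1 := by
    unfold Wc
    have harg : 2 * (Real.pi : ℂ) * Complex.I * (((N : ℤ) * c : ℤ) : ℂ) / N
        = (c : ℂ) * (2 * Real.pi * Complex.I) := by
      push_cast
      field_simp
    rw [harg, Complex.exp_int_mul_two_pi_mul_I]
  rw [this, mul_one]

lemma emod_sub_dvd (n x : ℤ) : n ∣ (x % n - x) :=
  ⟨-(x / n), by rw [Int.emod_def]; ring⟩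

lemma modeq_emod (n x : ℤ) : x % n ≡ x [ZMOD n] :=
  Int.emod_emod_of_dvd x dvd_rfl

lemma fin_add_modeq {N : ℕ} (a b : Fin N) :
    ((((a + b : Fin N) : ℕ) : ℤ)) ≡ ((a : ℕ) : ℤ) + ((b : ℕ) : ℤ) [ZMOD (N : ℤ)] := by
  have h1 : (((a + b : Fin N) : ℕ) : ℤ) = (((a : ℕ) : ℤ) + ((b : ℕ) : ℤ)) % N := by
    rw [Fin.val_add]; push_cast; ring
  rw [h1]
  exact modeq_emod _ _

lemma fin_neg_modeq {N : ℕ} (a : Fin N) :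
    ((((-a : Fin N) : ℕ) : ℤ)) ≡ -((a : ℕ) : ℤ) [ZMOD (N : ℤ)] := by
  have hle : (a : ℕ) ≤ N := a.isLt.le
  have h1 : (((-a : Fin N) : ℕ) : ℤ) = (((N : ℤ) - ((a : ℕ) : ℤ))) % N := by
    rw [Fin.neg_def]
    simp only [Fin.val_mk]
    push_cast [Nat.cast_sub hle]
    ring_nf
  rw [h1]
  calc ((N : ℤ) - ((a : ℕ) : ℤ)) % N ≡ (N : ℤ) - ((a : ℕ) : ℤ) [ZMOD (N : ℤ)] := modeq_emod _ _
    _ ≡ 0 - ((a : ℕ) : ℤ) [ZMOD (N : ℤ)] := by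
        exact Int.ModEq.sub_right _ (Int.modEq_zero_iff_dvd.mpr dvd_rfl)
    _ = -((a : ℕ) : ℤ) := by ring

lemma fin_sub_modeq {N : ℕ} (hN : 0 < N) (a b : Fin N) :
    ((((a - b : Fin N) : ℕ) : ℤ)) ≡ ((a : ℕ) : ℤ) - ((b : ℕ) : ℤ) [ZMOD (N : ℤ)] := by
  haveI : NeZero N := ⟨hN.ne'⟩
  have : a - b = a + (-b) := by rw [sub_eq_add_neg]
  rw [this]
  calc (((a + (-b) : Fin N) : ℕ) : ℤ) ≡ ((a : ℕ) : ℤ) + (((-b : Fin N) : ℕ) : ℤ) [ZMOD (N : ℤ)] :=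
      fin_add_modeq a (-b)
    _ ≡ ((a : ℕ) : ℤ) + (-((b : ℕ) : ℤ)) [ZMOD (N : ℤ)] :=
      Int.ModEq.add_left _ (fin_neg_modeq b)
    _ = ((a : ℕ) : ℤ) - ((b : ℕ) : ℤ) := by ring

/-- The eigenvalues of L = ε(M - diag(M·1)) are λ_{m,q} = ε[(Ĥ(q+m)+Ĥ(q−m))/2 − Ĥ(q)]
with eigenvectors the Fourier vectors v_m. -/
theorem stmt_6 (N : ℕ) (hN : 0 < N) (q : ℤ) (ε : ℝ) (h : Fin N → ℝ)
    (hsym : ∀ j : Fin N, h j = h (-j))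
    (M : Matrix (Fin N) (Fin N) ℂ)
    (hM : ∀ j k : Fin N, M j k =
      (h (k - j) : ℂ) * (Real.cos (2 * Real.pi * q * (((k : ℕ) : ℝ) - ((j : ℕ) : ℝ)) / N) : ℂ))
    (L : Matrix (Fin N) (Fin N) ℂ)
    (hL : L = (ε : ℂ) • (M - Matrix.diagonal (M.mulVec (fun _ => 1))))
    (v : Fin N → Fin N → ℂ)
    (hv : ∀ m j : Fin N, v m j = Complex.exp (2 * Real.pi * Complex.I * (m : ℕ) * (j : ℕ) / N)) :
    ∀ m : Fin N, L.mulVec (v m) =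
      ((ε : ℂ) * ((dftR N h (q + (m : ℕ)) + dftR N h (q - (m : ℕ))) / 2 - dftR N h q)) • v m := by
  haveI : NeZero N := ⟨hN.ne'⟩
  -- notation
  set S : ℤ → ℂ := fun s => ∑ l : Fin N, (h l : ℂ) * Wc N (s * (l : ℕ)) with hS
  -- the DFT in terms of S
  have hdft : ∀ s : ℤ, dftR N h s = S (-s) := by
    intro s
    unfold dftR
    apply Finset.sum_congr rfl
    intro l _
    congr 1
    unfold Wc
    congr 1
    push_cast
    ring
  -- symmetry of S
  have hSsymm : ∀ s : ℤ, S s = S (-s) := by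
    intro s
    rw [hS]
    refine Fintype.sum_equiv (Equiv.neg (Fin N)) _ _ ?_
    intro l
    simp only [Equiv.neg_apply]
    rw [← hsym l]
    congr 1
    apply Wc_congr hN
    refine Int.ModEq.symm ?_
    calc (-s * (((-l : Fin N) : ℕ) : ℤ)) ≡ -s * (-((l : ℕ) : ℤ)) [ZMOD (N : ℤ)] :=
        Int.ModEq.mul_left (-s) (fin_neg_modeq l)
      _ = s * ((l : ℕ) : ℤ) := by ring
  -- cos in terms of Wc
  have hcos : ∀ j k : Fin N,
      ((Real.cos (2 * Real.pi * q * (((k : ℕ) : ℝ) - ((j : ℕ) : ℝ)) / N) : ℝ) : ℂ)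
        = (Wc N (q * (((k : ℕ) : ℤ) - ((j : ℕ) : ℤ)))
          + Wc N (-q * (((k : ℕ) : ℤ) - ((j : ℕ) : ℤ)))) / 2 := by
    intro j k
    rw [Complex.ofReal_cos]
    rw [eq_div_iff (two_ne_zero' ℂ)]
    rw [mul_comm, Complex.two_cos]
    unfold Wc
    congr 1 <;> · congr 1; push_cast; ring
  -- the key weighted row-sum computation
  have hrow : ∀ (t : ℤ) (j : Fin N),
      (∑ k : Fin N, M j k * Wc N (t * (k : ℕ)))
        = Wc N (t * (j : ℕ)) * ((S (q + t) + S (t - q)) / 2) := by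
    intro t j
    have := Fintype.sum_equiv (Equiv.addLeft j : Fin N ≃ Fin N)
      (fun l => M j (j + l) * Wc N (t * ((j + l : Fin N) : ℕ)))
      (fun k => M j k * Wc N (t * (k : ℕ))) (fun l => rfl)
    rw [← this]
    have hterm : ∀ l : Fin N, M j (j + l) * Wc N (t * ((j + l : Fin N) : ℕ))
        = Wc N (t * (j : ℕ)) *
          ((h l : ℂ) * ((Wc N ((q + t) * (l : ℕ)) + Wc N ((t - q) * (l : ℕ))) / 2)) := by
      intro l
      rw [hM, hcos]
      have hidx : (j + l : Fin N) - j = l := by rw [add_sub_cancel_left]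
      rw [hidx]
      have hmod : ((((j + l : Fin N) : ℕ) : ℤ)) ≡ ((j : ℕ) : ℤ) + ((l : ℕ) : ℤ) [ZMOD (N : ℤ)] :=
        fin_add_modeq j l
      have e1 : Wc N (q * ((((j + l : Fin N) : ℕ) : ℤ) - ((j : ℕ) : ℤ))) = Wc N (q * (l : ℕ)) := by
        apply Wc_congr hN
        calc q * ((((j + l : Fin N) : ℕ) : ℤ) - ((j : ℕ) : ℤ))
            ≡ q * (((j : ℕ) : ℤ) + ((l : ℕ) : ℤ) - ((j : ℕ) : ℤ)) [ZMOD (N : ℤ)] :=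
            Int.ModEq.mul_left q (hmod.sub_right _)
          _ = q * ((l : ℕ) : ℤ) := by ring
      have e2 : Wc N (-q * ((((j + l : Fin N) : ℕ) : ℤ) - ((j : ℕ) : ℤ))) = Wc N (-q * (l : ℕ)) := by
        apply Wc_congr hN
        calc -q * ((((j + l : Fin N) : ℕ) : ℤ) - ((j : ℕ) : ℤ))
            ≡ -q * (((j : ℕ) : ℤ) + ((l : ℕ) : ℤ) - ((j : ℕ) : ℤ)) [ZMOD (N : ℤ)] :=
            Int.ModEq.mul_left (-q) (hmod.sub_right _)
          _ = -q * ((l : ℕ) : ℤ) := by ring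
      have e3 : Wc N (t * (((j + l : Fin N) : ℕ) : ℤ)) = Wc N (t * (j : ℕ)) * Wc N (t * (l : ℕ)) := by
        rw [← Wc_add]
        apply Wc_congr hN
        calc t * (((j + l : Fin N) : ℕ) : ℤ)
            ≡ t * (((j : ℕ) : ℤ) + ((l : ℕ) : ℤ)) [ZMOD (N : ℤ)] := Int.ModEq.mul_left t hmod
          _ = t * ((j : ℕ) : ℤ) + t * ((l : ℕ) : ℤ) := by ring
      rw [e1, e2, e3]
      have e4 : Wc N (q * (l : ℕ)) * Wc N (t * (l : ℕ)) = Wc N ((q + t) * (l : ℕ)) := by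
        rw [← Wc_add]; congr 1; ring
      have e5 : Wc N (-q * (l : ℕ)) * Wc N (t * (l : ℕ)) = Wc N ((t - q) * (l : ℕ)) := by
        rw [← Wc_add]; congr 1; ring
      rw [← e4, ← e5]
      ring
    rw [Finset.sum_congr rfl (fun l _ => hterm l)]
    rw [← Finset.mul_sum]
    congr 1
    rw [hS]
    simp only [div_eq_mul_inv, Finset.sum_mul, ← Finset.sum_add_distrib]
    congr 1
    ext l
    ring
  -- now the main computation
  intro m
  funext j
  rw [hL]
  rw [Matrix.smul_mulVec, Matrix.sub_mulVec]
  simp only [Pi.smul_apply, Pi.sub_apply, Matrix.mulVec_diagonal, smul_eq_mul]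
  -- the row sums
  have hMv : M.mulVec (v m) j = Wc N ((m : ℕ) * (j : ℕ)) * ((S (q + (m : ℕ)) + S ((m : ℕ) - q)) / 2) := by
    have : M.mulVec (v m) j = ∑ k : Fin N, M j k * Wc N ((m : ℕ) * (k : ℕ)) := by
      unfold Matrix.mulVec dotProduct
      apply Finset.sum_congr rfl
      intro k _
      congr 1
      rw [hv]
      unfold Wc
      congr 1
      push_cast
      ring
    rw [this, hrow]
  have hM1 : M.mulVec (fun _ => 1) j = (S (q + 0) + S (0 - q)) / 2 := by
    have : M.mulVec (fun _ => 1) j = ∑ k : Fin N, M j k * Wc N (0 * (k : ℕ)) := by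
      unfold Matrix.mulVec dotProduct
      apply Finset.sum_congr rfl
      intro k _
      congr 1
      unfold Wc
      simp
    rw [this, hrow]
    simp [Wc]
  have hvj : v m j = Wc N ((m : ℕ) * (j : ℕ)) := by
    rw [hv]
    unfold Wc
    congr 1
    push_cast
    ring
  rw [hMv, hM1, hvj]
  -- rewrite dftR's in terms of S
  rw [hdft, hdft, hdft]
  have h1 : S (-(q + (m : ℕ))) = S (q + (m : ℕ)) := (hSsymm _).symm
  have h2 : S (-(q - (m : ℕ))) = S ((m : ℕ) - q) := by congr 1; ring
  have h3 : S (-q) = S q := (hSsymm q).symm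
  have h4 : S (q + 0) = S q := by norm_num
  have h5 : S (0 - q) = S (-q) := by congr 1; ring
  rw [h1, h2, h3, h4, h5, h3]
  ring
end

section
/- On the complete graph on N ≥ 2 nodes (h_0 = 0, h_j = 1 otherwise), every twisted state with q ≢ 0 (mod N) is linearly unstable: there exists m ∈ {1,…,N−1} with λ_{m,q} = (Ĥ(q+m)+Ĥ(q−m))/2 − Ĥ(q) > 0. In fact, choosing m = q gives λ_{q,q} = (Ĥ(2q) + Ĥ(0))/2 − Ĥ(q) ≥ (−1 + (N−1))/2 + 1 = N/2 > 0. -/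
lemma dftR_key (N : ℕ) (hN : 2 ≤ N) (h : Fin N → ℝ)
    (hh0 : ∀ j : Fin N, (j : ℕ) = 0 → h j = 0)
    (hh1 : ∀ j : Fin N, (j : ℕ) ≠ 0 → h j = 1)
    (m : ℤ) :
    dftR N h m = if (N : ℤ) ∣ m then ((N : ℂ) - 1) else -1 := by
  have hNpos : 0 < N := by omega
  haveI : NeZero N := ⟨by omega⟩
  have hN0 : (N : ℂ) ≠ 0 := Nat.cast_ne_zero.2 (by omega)
  have h2 : (2 : ℂ) * Real.pi * Complex.I ≠ 0 := by
    simp [Real.pi_ne_zero, Complex.I_ne_zero]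
  set ζ : ℂ := Complex.exp (-2 * Real.pi * Complex.I * m / N) with hζ
  have hterm : ∀ k : ℕ,
      Complex.exp (-2 * Real.pi * Complex.I * m * (k : ℕ) / N) = ζ ^ k := by
    intro k
    rw [hζ, ← Complex.exp_nat_mul]
    congr 1
    ring
  have hsum : dftR N h m = (∑ k ∈ Finset.range N, ζ ^ k) - 1 := by
    unfold dftR
    have key : ∀ k : Fin N, (h k : ℂ) * Complex.exp (-2 * Real.pi * Complex.I * m * (k : ℕ) / N)
        = ζ ^ (k : ℕ) - (if k = (0 : Fin N) then 1 else 0) := by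
      intro k
      by_cases hk : (k : ℕ) = 0
      · have hk0 : k = 0 := by
          ext; simpa using hk
        rw [hh0 k hk, hk0]
        simp
      · have hk' : k ≠ 0 := fun hc => hk (by simp [hc])
        rw [hh1 k hk, hterm]
        simp [hk']
    rw [Finset.sum_congr rfl (fun k _ => key k), Finset.sum_sub_distrib]
    simp [Fin.sum_univ_eq_sum_range (fun k => ζ ^ k)]
  by_cases hd : (N : ℤ) ∣ m
  · obtain ⟨t, rfl⟩ := hd
    have hζ1 : ζ = 1 := by
      rw [hζ]
      have e1 : (-2 * Real.pi * Complex.I * ((N * t : ℤ) : ℂ) / N) = (-t : ℤ) * (2 * Real.pi * Complex.I) := by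
        push_cast
        field_simp
      rw [e1]
      exact Complex.exp_int_mul_two_pi_mul_I (-t)
    rw [hsum, hζ1, if_pos ⟨t, rfl⟩]
    simp
  · have hζ1 : ζ ≠ 1 := by
      rw [hζ]
      intro hc
      rw [Complex.exp_eq_one_iff] at hc
      obtain ⟨n, hn⟩ := hc
      apply hd ⟨-n, ?_⟩
      have hm : (m : ℂ) = ((N * -n : ℤ) : ℂ) := by
        field_simp at hn
        push_cast
        apply mul_left_cancel₀ h2
        linear_combination (-(2 * Real.pi * Complex.I)) * hn
      exact_mod_cast hm
    have hζN : ζ ^ N = 1 := by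
      rw [hζ, ← Complex.exp_nat_mul]
      have e1 : (N : ℂ) * (-2 * Real.pi * Complex.I * m / N) = (-m : ℤ) * (2 * Real.pi * Complex.I) := by
        push_cast
        field_simp
      rw [e1]
      exact Complex.exp_int_mul_two_pi_mul_I (-m)
    rw [hsum, geom_sum_eq hζ1, hζN, if_neg hd]
    simp

/-- On the complete graph every twisted state with q ≢ 0 (mod N) is linearly unstable;
in fact the mode m = q gives λ_{q,q} ≥ N/2 > 0. -/
theorem stmt_13 (N : ℕ) (hN : 2 ≤ N) (h : Fin N → ℝ)
    (hh0 : ∀ j : Fin N, (j : ℕ) = 0 → h j = 0)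
    (hh1 : ∀ j : Fin N, (j : ℕ) ≠ 0 → h j = 1)
    (q : ℤ) (hq : ¬ (N : ℤ) ∣ q) :
    (∃ m : ℤ, 1 ≤ m ∧ m ≤ (N : ℤ) - 1 ∧
      0 < ((dftR N h (q + m) + dftR N h (q - m)) / 2 - dftR N h q).re) ∧
    (N : ℝ) / 2 ≤ ((dftR N h (q + q) + dftR N h (q - q)) / 2 - dftR N h q).re := by
  have hNpos : (0 : ℤ) < N := by exact_mod_cast Nat.pos_of_ne_zero (by omega)
  have hNR : (2 : ℝ) ≤ N := by exact_mod_cast hN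
  have key := dftR_key N hN h hh0 hh1
  constructor
  · set m := q % N with hm
    have hm0 : 0 ≤ m := Int.emod_nonneg q (by omega)
    have hmN : m < N := Int.emod_lt_of_pos q hNpos
    have hmne : m ≠ 0 := fun hc => hq (Int.dvd_of_emod_eq_zero hc)
    have hd1 : (N : ℤ) ∣ q - m := Int.dvd_self_sub_of_emod_eq rfl
    refine ⟨m, by omega, by omega, ?_⟩
    rw [key, key, key, if_pos hd1, if_neg hq]
    by_cases h2 : (N : ℤ) ∣ q + m <;>
      simp [h2, Complex.div_re, Complex.add_re, Complex.sub_re] <;> nlinarith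
  · have hd0 : (N : ℤ) ∣ q - q := by simp
    rw [key, key, key, if_pos hd0, if_neg hq]
    by_cases h2 : (N : ℤ) ∣ q + q <;>
      simp [h2, Complex.div_re, Complex.add_re, Complex.sub_re] <;> nlinarith
end

section
/- For the nearest-neighbor ring (k = 1, so h_1 = h_{N−1} = 1, all other entries 0), Ĥ(q) = 2cos(2πq/N) and the stability eigenvalues are λ_{m,q} = 2cos(2πq/N)[cos(2πm/N) − 1]. Hence for all q with cos(2πq/N) > 0 (i.e., |q| < N/4), all λ_{m,q} ≤ 0 for m ∈ {1,…,N−1}, so these twisted states are linearly stable. -/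
lemma dftR_eq (N : ℕ) (hN : 3 ≤ N) (h : Fin N → ℝ)
    (hh : ∀ j : Fin N, h j = if (j : ℕ) = 1 ∨ (j : ℕ) = N - 1 then 1 else 0)
    (q : ℤ) : dftR N h q = ((2 * Real.cos (2 * Real.pi * q / N) : ℝ) : ℂ) := by
  have h1N : (1 : ℕ) < N := by omega
  have h2N : N - 1 < N := by omega
  set i1 : Fin N := ⟨1, h1N⟩
  set i2 : Fin N := ⟨N - 1, h2N⟩
  have hne : i1 ≠ i2 := by
    refine Fin.ne_of_val_ne ?_
    simp only [i1, i2]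
    omega
  have key : ∀ k : Fin N, (h k : ℂ) * Complex.exp (-2 * Real.pi * Complex.I * q * (k : ℕ) / N)
      = (if k = i1 then Complex.exp (-2 * Real.pi * Complex.I * q * ((i1 : ℕ)) / N) else 0)
        + (if k = i2 then Complex.exp (-2 * Real.pi * Complex.I * q * ((i2 : ℕ)) / N) else 0) := by
    intro k
    rcases eq_or_ne k i1 with rfl | hk1
    · simp [hh, hne, i1]
    · rcases eq_or_ne k i2 with rfl | hk2
      · simp [hh, hne.symm, i2]
      · have : h k = 0 := by
          rw [hh]
          have hk1' : (k : ℕ) ≠ 1 := fun hc => hk1 (Fin.ext hc)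
          have hk2' : (k : ℕ) ≠ N - 1 := fun hc => hk2 (Fin.ext hc)
          simp [hk1', hk2']
        simp [this, hk1, hk2]
  rw [dftR]
  simp_rw [key]
  rw [Finset.sum_add_distrib, Finset.sum_ite_eq' Finset.univ i1,
    Finset.sum_ite_eq' Finset.univ i2]
  simp only [Finset.mem_univ, if_true]
  have hNne : (N : ℂ) ≠ 0 := Nat.cast_ne_zero.mpr (by omega)
  have hcast : ((i2 : ℕ) : ℂ) = (N : ℂ) - 1 := by
    simp only [i2]
    push_cast [Nat.cast_sub (by omega : 1 ≤ N)]
    ring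
  have e2 : Complex.exp (-2 * Real.pi * Complex.I * q * ((i2 : ℕ)) / N)
      = Complex.exp (2 * Real.pi * Complex.I * q / N) := by
    rw [hcast]
    have : (-2 * Real.pi * Complex.I * q * ((N : ℂ) - 1) / N)
        = (2 * Real.pi * Complex.I * q / N) + (q * (-(2 * Real.pi * Complex.I))) := by
      field_simp; ring
    rw [this, Complex.exp_add]
    have : Complex.exp ((q : ℂ) * (-(2 * Real.pi * Complex.I))) = 1 := by
      simpa using Complex.exp_int_mul_two_pi_mul_I (-q)
    rw [this, mul_one]
  rw [e2]
  have e1 : (-2 * Real.pi * Complex.I * q * ((i1 : ℕ)) / N)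
      = -(Complex.I * (2 * Real.pi * q / N)) := by
    simp only [i1]; push_cast; ring
  have e2' : (2 * Real.pi * Complex.I * (q : ℂ) / N) = Complex.I * (2 * Real.pi * q / N) := by
    ring
  rw [e1, e2']
  rw [show Complex.exp (-(Complex.I * (2 * Real.pi * (q:ℂ) / N)))
      + Complex.exp (Complex.I * (2 * Real.pi * (q:ℂ) / N))
      = 2 * Complex.cos (2 * Real.pi * q / N) by
    rw [Complex.cos]; ring_nf]
  have : ((2 * Real.pi * (q : ℤ) / N : ℝ) : ℂ) = 2 * (Real.pi : ℂ) * (q : ℂ) / N := by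
    push_cast; ring
  rw [← this, ← Complex.ofReal_cos]
  push_cast
  ring

/-- Nearest-neighbor ring: Ĥ(q) = 2cos(2πq/N), λ_{m,q} = 2cos(2πq/N)[cos(2πm/N)−1],
and twisted states with cos(2πq/N) > 0 are linearly stable. -/
theorem stmt_14 (N : ℕ) (hN : 3 ≤ N) (h : Fin N → ℝ)
    (hh : ∀ j : Fin N, h j = if (j : ℕ) = 1 ∨ (j : ℕ) = N - 1 then 1 else 0) :
    (∀ q : ℤ, dftR N h q = ((2 * Real.cos (2 * Real.pi * q / N) : ℝ) : ℂ)) ∧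
    (∀ q m : ℤ, (dftR N h (q + m) + dftR N h (q - m)) / 2 - dftR N h q
      = ((2 * Real.cos (2 * Real.pi * q / N) * (Real.cos (2 * Real.pi * m / N) - 1) : ℝ) : ℂ)) ∧
    (∀ q : ℤ, 0 < Real.cos (2 * Real.pi * q / N) →
      ∀ m : ℤ, 1 ≤ m → m ≤ (N : ℤ) - 1 →
        ((dftR N h (q + m) + dftR N h (q - m)) / 2 - dftR N h q).re ≤ 0) := by
  have hd := dftR_eq N hN h hh
  have lam : ∀ q m : ℤ, (dftR N h (q + m) + dftR N h (q - m)) / 2 - dftR N h q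
      = ((2 * Real.cos (2 * Real.pi * q / N) * (Real.cos (2 * Real.pi * m / N) - 1) : ℝ) : ℂ) := by
    intro q m
    rw [hd, hd, hd]
    have trig : ∀ a b : ℝ, (2 * Real.cos (a + b) + 2 * Real.cos (a - b)) / 2 - 2 * Real.cos a
        = 2 * Real.cos a * (Real.cos b - 1) := by
      intro a b
      rw [Real.cos_add, Real.cos_sub]; ring
    have h1 : (2 * Real.pi * ((q + m : ℤ) : ℝ) / N) = 2 * Real.pi * q / N + 2 * Real.pi * m / N := by
      push_cast; ring
    have h2 : (2 * Real.pi * ((q - m : ℤ) : ℝ) / N) = 2 * Real.pi * q / N - 2 * Real.pi * m / N := by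
      push_cast; ring
    rw [← Complex.ofReal_add, show ((2:ℂ)) = ((2:ℝ):ℂ) by norm_num,
      ← Complex.ofReal_div, ← Complex.ofReal_sub]
    congr 1
    rw [h1, h2, trig]
  refine ⟨hd, lam, ?_⟩
  intro q hq m _ _
  rw [lam q m]
  rw [Complex.ofReal_re]
  have : Real.cos (2 * Real.pi * m / N) - 1 ≤ 0 := by
    have := Real.cos_le_one (2 * Real.pi * m / N); linarith
  nlinarith
end
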